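/- arXiv:0902.0841 — 3 statements merged into one kernel-verified Lean document; each statement's English description precedes it below -/
import Mathlib

section
/- g(3) = 3: there exists a correct adaptive strategy of depth 3 in the heavier-fakes model on 3 coins, but there is no correct adaptive strategy of depth 2 on 3 coins (the exceptional case of Proposition 1). -/
/-!
Adaptive weighing model with heavier fakes and reference coins.
Coins are the elements of `Fin n`; the unknown fake set is an arbitrary
`F : Finset (Fin n)`.  A weighing is a pair `(L, R)` of disjoint subsets of
`Fin n` (pans may be padded with known-genuine reference coins, so `L` and `R`
need not have the same size), and its outcome is the three-valued comparison
of `|L ∩ F|` and `|R ∩ F|`.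
-/

/-- Outcome of weighing pans `L` and `R` when the fake set is `F`. -/
def weighOutcome {n : ℕ} (L R F : Finset (Fin n)) : Ordering :=
  compare (L ∩ F).card (R ∩ F).card

/-- The outcome sequence produced by fake set `F` after `k` weighings of the
adaptive strategy `weigh` (which assigns a weighing to each outcome history). -/
def runList {n : ℕ} (weigh : List Ordering → Finset (Fin n) × Finset (Fin n))
    (F : Finset (Fin n)) : ℕ → List Ordering
  | 0 => []
  | k + 1 =>
    let σ := runList weigh F k
    σ ++ [weighOutcome (weigh σ).1 (weigh σ).2 F]

/-- `(weigh, answer)` is a correct adaptive strategy of depth `k` on `n` coins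
in the heavier-fakes model: every prescribed weighing has disjoint pans, and
for every fake set `F` the answer at the outcome sequence produced by `F`
equals `F`. -/
def IsCorrectStrategy (n k : ℕ)
    (weigh : List Ordering → Finset (Fin n) × Finset (Fin n))
    (answer : List Ordering → Finset (Fin n)) : Prop :=
  (∀ σ : List Ordering, σ.length < k → Disjoint (weigh σ).1 (weigh σ).2) ∧
  (∀ F : Finset (Fin n), answer (runList weigh F k) = F)

/-- There is a correct adaptive strategy of depth `k` on `n` coins. -/
def HasStrategy (n k : ℕ) : Prop :=
  ∃ weigh answer, IsCorrectStrategy n k weigh answer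

/-- `g n` is the least number of weighings sufficient to find all the fakes
among `n` coins in the heavier-fakes model. -/
noncomputable def g (n : ℕ) : ℕ := sInf {k | HasStrategy n k}

instance : Fintype Ordering :=
  ⟨{.lt, .eq, .gt}, by intro x; cases x <;> decide⟩

/-- The depth-3 strategy: weigh coin `σ.length` against the reference pan. -/
def w3 (σ : List Ordering) : Finset (Fin 3) × Finset (Fin 3) :=
  ({⟨min σ.length 2, Nat.lt_succ_of_le (Nat.min_le_right _ _)⟩}, ∅)

def a3 (σ : List Ordering) : Finset (Fin 3) :=
  Finset.univ.filter fun i => σ.getD i.val .eq = .gt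

lemma hasStrategy_3_3 : HasStrategy 3 3 := by
  refine ⟨w3, a3, fun σ _ => ?_, by decide⟩
  simp [w3]

lemma key (L R : Finset (Fin 3)) :
    ∃ o : Ordering,
      4 ≤ (Finset.univ.filter fun F : Finset (Fin 3) => weighOutcome L R F = o).card := by
  revert L R; decide

lemma not_hasStrategy_3_2 : ¬ HasStrategy 3 2 := by
  rintro ⟨weigh, answer, -, hans⟩
  obtain ⟨o, ho⟩ := key (weigh []).1 (weigh []).2
  set S := Finset.univ.filter fun F : Finset (Fin 3) =>
    weighOutcome (weigh []).1 (weigh []).2 F = o with hS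
  have hrun : ∀ F ∈ S, runList weigh F 2 =
      [o, weighOutcome (weigh [o]).1 (weigh [o]).2 F] := by
    intro F hF
    have h1 : weighOutcome (weigh []).1 (weigh []).2 F = o := by
      simpa [hS] using hF
    simp [runList, h1]
  have hinj : Set.InjOn (fun F => weighOutcome (weigh [o]).1 (weigh [o]).2 F) S := by
    intro F1 h1 F2 h2 he
    have : answer (runList weigh F1 2) = answer (runList weigh F2 2) := by
      rw [hrun F1 (Finset.mem_coe.mp h1), hrun F2 (Finset.mem_coe.mp h2)]
      exact congrArg (fun x => answer [o, x]) he
    rwa [hans, hans] at this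
  have hle : S.card ≤ (Finset.univ : Finset Ordering).card :=
    Finset.card_le_card_of_injOn
      (t := (Finset.univ : Finset Ordering))
      (fun F => weighOutcome (weigh [o]).1 (weigh [o]).2 F)
      (fun _ _ => Finset.mem_univ _) hinj
  have h3 : (Finset.univ : Finset Ordering).card = 3 := rfl
  rw [h3] at hle
  omega

lemma not_hasStrategy_3_1 : ¬ HasStrategy 3 1 := by
  rintro ⟨weigh, answer, -, hans⟩
  obtain ⟨o, ho⟩ := key (weigh []).1 (weigh []).2
  obtain ⟨F1, h1, F2, h2, hne⟩ := Finset.one_lt_card.mp (lt_of_lt_of_le (by norm_num) ho)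
  simp only [Finset.mem_filter] at h1 h2
  have e1 : runList weigh F1 1 = [o] := by simp [runList, h1.2]
  have e2 : runList weigh F2 1 = [o] := by simp [runList, h2.2]
  exact hne (by rw [← hans F1, ← hans F2, e1, e2])

lemma not_hasStrategy_3_0 : ¬ HasStrategy 3 0 := by
  rintro ⟨weigh, answer, -, hans⟩
  have h1 := hans ∅
  have h2 := hans {0}
  simp only [runList] at h1 h2
  exact absurd (h1.symm.trans h2) (by decide)

/-- **The exceptional case of Proposition 1: `g 3 = 3`.** There is a correct
adaptive strategy of depth `3` on `3` coins, but none of depth `2`. -/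
theorem g_three_eq_three :
    HasStrategy 3 3 ∧ ¬ HasStrategy 3 2 ∧ g 3 = 3 := by
  refine ⟨hasStrategy_3_3, not_hasStrategy_3_2, ?_⟩
  have hmem : (3 : ℕ) ∈ {k | HasStrategy 3 k} := hasStrategy_3_3
  unfold g
  apply le_antisymm
  · exact csInf_le (OrderBot.bddBelow _) hmem
  · by_contra hlt
    push_neg at hlt
    have hm : HasStrategy 3 (sInf {k | HasStrategy 3 k}) :=
      Nat.sInf_mem ⟨3, hmem⟩
    rcases (by omega :
        sInf {k | HasStrategy 3 k} = 0 ∨ sInf {k | HasStrategy 3 k} = 1 ∨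
          sInf {k | HasStrategy 3 k} = 2) with h | h | h
    · exact not_hasStrategy_3_0 (h ▸ hm)
    · exact not_hasStrategy_3_1 (h ▸ hm)
    · exact not_hasStrategy_3_2 (h ▸ hm)
end

section
/- g(4) = 3: there exists a correct adaptive strategy of depth 3 in the heavier-fakes model on 4 coins, but there is no correct adaptive strategy of depth 2 on 4 coins (a fact used in the proof of Lemma 2). -/
lemma card_ordering : Fintype.card Ordering = 3 := rfl

def myWeigh : List Ordering → Finset (Fin 4) × Finset (Fin 4)
  | [] => ({0}, {1})
  | [Ordering.eq] => ({0, 1}, {2, 3})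
  | [_] => ({2}, {3})
  | [Ordering.gt, Ordering.eq] => ({2}, ∅)
  | [Ordering.lt, Ordering.eq] => ({2}, ∅)
  | [Ordering.eq, Ordering.eq] => ({0}, ∅)
  | [Ordering.eq, _] => ({2}, {3})
  | _ => (∅, ∅)

def myAnswer : List Ordering → Finset (Fin 4)
  | [Ordering.gt, Ordering.gt, _] => {0, 2}
  | [Ordering.gt, Ordering.lt, _] => {0, 3}
  | [Ordering.gt, Ordering.eq, Ordering.gt] => {0, 2, 3}
  | [Ordering.gt, Ordering.eq, _] => {0}
  | [Ordering.lt, Ordering.gt, _] => {1, 2}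
  | [Ordering.lt, Ordering.lt, _] => {1, 3}
  | [Ordering.lt, Ordering.eq, Ordering.gt] => {1, 2, 3}
  | [Ordering.lt, Ordering.eq, _] => {1}
  | [Ordering.eq, Ordering.eq, Ordering.gt] => {0, 1, 2, 3}
  | [Ordering.eq, Ordering.eq, _] => ∅
  | [Ordering.eq, Ordering.lt, Ordering.gt] => {2}
  | [Ordering.eq, Ordering.lt, Ordering.lt] => {3}
  | [Ordering.eq, Ordering.lt, _] => {2, 3}
  | [Ordering.eq, Ordering.gt, Ordering.gt] => {0, 1, 2}
  | [Ordering.eq, Ordering.gt, Ordering.lt] => {0, 1, 3}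
  | [Ordering.eq, Ordering.gt, _] => {0, 1}
  | _ => ∅

lemma hasStrategy_4_3 : HasStrategy 4 3 := by
  refine ⟨myWeigh, myAnswer, ?_, ?_⟩
  · rintro (_ | ⟨a, _ | ⟨b, _ | t⟩⟩) h
    · decide
    · cases a <;> decide
    · cases a <;> cases b <;> decide
    · simp at h; omega
  · decide

lemma runList_length {n : ℕ} (weigh : List Ordering → Finset (Fin n) × Finset (Fin n))
    (F : Finset (Fin n)) (k : ℕ) : (runList weigh F k).length = k := by
  induction k with
  | zero => rfl
  | succ k ih => simp [runList, ih]

lemma card_le_of_hasStrategy {n k : ℕ} (h : HasStrategy n k) : 2 ^ n ≤ 3 ^ k := by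
  obtain ⟨weigh, answer, _, hans⟩ := h
  let f : Finset (Fin n) → List.Vector Ordering k :=
    fun F => ⟨runList weigh F k, runList_length weigh F k⟩
  have hinj : Function.Injective f := by
    intro F F' hFF'
    have : runList weigh F k = runList weigh F' k := congrArg Subtype.val hFF'
    rw [← hans F, ← hans F', this]
  have := Fintype.card_le_of_injective f hinj
  simpa [card_vector, card_ordering] using this

lemma not_hasStrategy_4_2 : ¬ HasStrategy 4 2 := by
  intro h
  have := card_le_of_hasStrategy h
  norm_num at this

/-- **`g 4 = 3` (used in the proof of Lemma 2).** There is a correct adaptive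
strategy of depth `3` on `4` coins, but none of depth `2`. -/
theorem g_four_eq_three :
    HasStrategy 4 3 ∧ ¬ HasStrategy 4 2 ∧ g 4 = 3 := by
  refine ⟨hasStrategy_4_3, not_hasStrategy_4_2, ?_⟩
  have hne : {k | HasStrategy 4 k}.Nonempty := ⟨3, hasStrategy_4_3⟩
  have hmem := Nat.sInf_mem hne
  have h1 : g 4 ≤ 3 := Nat.sInf_le hasStrategy_4_3
  have h2 : 3 ≤ g 4 := by
    have h16 : (16 : ℕ) ≤ 3 ^ g 4 := by
      have := card_le_of_hasStrategy hmem
      simpa [g] using this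
    by_contra hlt
    push_neg at hlt
    interval_cases h : (g 4) <;> norm_num at h16
  omega
end

section
/- Lemma 2: for every n ≥ 1 and every k ≥ 1, if there exists a correct adaptive strategy of depth k in the heavier-fakes model on n coins, then there exists a correct adaptive strategy of depth k + 2 on n + 3 coins. Consequently g(n + 3) ≤ g(n) + 2 for all n ≥ 1. -/
/-! ### Auxiliary machinery -/

private def bnn (b : Bool) : ℕ := bif b then 1 else 0

private def ctrO1 (va vb vc vx : Bool) : Ordering :=
  compare (bnn va + bnn vb) (bnn vc + bnn vx)

private def ctrO2 (o1 : Ordering) (va vb vc vx : Bool) : Ordering :=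
  match o1 with
  | .lt => compare (bnn vc) (bnn va + bnn vx)
  | .eq => compare (bnn va) (bnn vb)
  | .gt => compare (bnn va) (bnn vb + bnn vc)

private def ctrPiv (o1 o2 : Ordering) : Fin 4 :=
  match o1, o2 with
  | .lt, .eq => 1 | .eq, .lt => 2 | .eq, .gt => 2 | .gt, .eq => 3 | _, _ => 0

private def ctrSel (bits : Bool × Bool × Bool × Bool) : Fin 4 → Bool
  | 0 => bits.1 | 1 => bits.2.1 | 2 => bits.2.2.1 | 3 => bits.2.2.2

private def ctrTbl (o1 o2 : Ordering) (p : Bool) : Bool × Bool × Bool × Bool :=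
  match o1, o2, p with
  | .lt, .lt, false => (false, false, false, true)
  | .lt, .lt, true  => (true, false, true, true)
  | .lt, .eq, false => (false, false, true, true)
  | .lt, .eq, true  => (false, true, true, true)
  | .lt, .gt, false => (false, false, true, false)
  | .eq, .lt, false => (false, true, false, true)
  | .eq, .lt, true  => (false, true, true, false)
  | .eq, .eq, false => (false, false, false, false)
  | .eq, .eq, true  => (true, true, true, true)
  | .eq, .gt, false => (true, false, false, true)
  | .eq, .gt, true  => (true, false, true, false)
  | .gt, .lt, false => (false, true, false, false)
  | .gt, .lt, true  => (true, true, true, false)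
  | .gt, .eq, false => (true, true, false, false)
  | .gt, .eq, true  => (true, true, false, true)
  | .gt, .gt, true  => (true, false, false, false)
  | _, _, _ => (false, false, false, false)

private theorem ctr_core (va vb vc vx : Bool) :
    ctrTbl (ctrO1 va vb vc vx) (ctrO2 (ctrO1 va vb vc vx) va vb vc vx)
      (ctrSel (va, vb, vc, vx)
        (ctrPiv (ctrO1 va vb vc vx) (ctrO2 (ctrO1 va vb vc vx) va vb vc vx)))
      = (va, vb, vc, vx) := by
  revert va vb vc vx; decide

private def ctrCoin (n : ℕ) : Fin 4 → Fin (n + 3)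
  | 0 => ⟨n, by omega⟩
  | 1 => ⟨n + 1, by omega⟩
  | 2 => ⟨n + 2, by omega⟩
  | 3 => ⟨0, by omega⟩

private def ctrEmb (n : ℕ) (w : Fin (n + 3)) (i : Fin n) : Fin (n + 3) :=
  if i.val = 0 then w else ⟨i.val, by omega⟩

private theorem ctrCoin_val (n : ℕ) (j : Fin 4) :
    (ctrCoin n j).val = n ∨ (ctrCoin n j).val = n + 1 ∨ (ctrCoin n j).val = n + 2 ∨
      (ctrCoin n j).val = 0 := by
  fin_cases j <;> simp [ctrCoin]

private theorem ctrEmb_inj (n : ℕ) (j : Fin 4) :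
    Function.Injective (ctrEmb n (ctrCoin n j)) := by
  have hv := ctrCoin_val n j
  intro i i' h
  unfold ctrEmb at h
  split_ifs at h with h1 h2 h2
  · exact Fin.ext (by omega)
  · have := congrArg Fin.val h
    simp at this
    have := i'.isLt
    omega
  · have := congrArg Fin.val h
    simp at this
    have := i.isLt
    omega
  · have := congrArg Fin.val h
    simp at this
    exact Fin.ext this

private theorem image_inter_card' {n : ℕ} (f : Fin n → Fin (n + 3))
    (hf : Function.Injective f) (L : Finset (Fin n)) (F : Finset (Fin (n + 3))) :
    ((L.image f) ∩ F).card = (L ∩ Finset.univ.filter (fun i => f i ∈ F)).card := by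
  have hset : L.image f ∩ F = (L ∩ Finset.univ.filter (fun i => f i ∈ F)).image f := by
    ext z
    simp only [Finset.mem_inter, Finset.mem_image, Finset.mem_filter, Finset.mem_univ,
      true_and]
    constructor
    · rintro ⟨⟨i, hiL, rfl⟩, hzF⟩
      exact ⟨i, ⟨hiL, hzF⟩, rfl⟩
    · rintro ⟨i, ⟨hiL, hiF⟩, rfl⟩
      exact ⟨⟨i, hiL, rfl⟩, hiF⟩
  rw [hset, Finset.card_image_of_injective _ hf]

private theorem weighOutcome_image {n : ℕ} (f : Fin n → Fin (n + 3))
    (hf : Function.Injective f) (L R : Finset (Fin n)) (F : Finset (Fin (n + 3))) :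
    weighOutcome (L.image f) (R.image f) F
      = weighOutcome L R (Finset.univ.filter (fun i => f i ∈ F)) := by
  unfold weighOutcome
  rw [image_inter_card' f hf, image_inter_card' f hf]

private def ctrW1 (n : ℕ) : Finset (Fin (n + 3)) × Finset (Fin (n + 3)) :=
  ({ctrCoin n 0, ctrCoin n 1}, {ctrCoin n 2, ctrCoin n 3})

private def ctrW2 (n : ℕ) : Ordering → Finset (Fin (n + 3)) × Finset (Fin (n + 3))
  | .lt => ({ctrCoin n 2}, {ctrCoin n 0, ctrCoin n 3})
  | .eq => ({ctrCoin n 0}, {ctrCoin n 1})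
  | .gt => ({ctrCoin n 0}, {ctrCoin n 1, ctrCoin n 2})

private def ctrWeigh (n : ℕ) (w₀ : List Ordering → Finset (Fin n) × Finset (Fin n)) :
    List Ordering → Finset (Fin (n + 3)) × Finset (Fin (n + 3))
  | [] => ctrW1 n
  | [o1] => ctrW2 n o1
  | o1 :: o2 :: τ =>
      ((w₀ τ).1.image (ctrEmb n (ctrCoin n (ctrPiv o1 o2))),
       (w₀ τ).2.image (ctrEmb n (ctrCoin n (ctrPiv o1 o2))))

private def ctrMk (n : ℕ) (bits : Bool × Bool × Bool × Bool) : Finset (Fin (n + 3)) :=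
  (Finset.univ.filter (fun j => ctrSel bits j = true)).image (ctrCoin n)

private def ctrAnswer (n : ℕ) (hn : 0 < n) (ans₀ : List Ordering → Finset (Fin n)) :
    List Ordering → Finset (Fin (n + 3))
  | o1 :: o2 :: τ =>
      (((ans₀ τ).erase ⟨0, hn⟩).image (ctrEmb n (ctrCoin n (ctrPiv o1 o2))))
        ∪ ctrMk n (ctrTbl o1 o2 (decide ((⟨0, hn⟩ : Fin n) ∈ ans₀ τ)))
  | _ => ∅

private theorem runList_succ {n : ℕ} (w : List Ordering → Finset (Fin n) × Finset (Fin n))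
    (F : Finset (Fin n)) (m : ℕ) :
    runList w F (m + 1)
      = runList w F m ++ [weighOutcome (w (runList w F m)).1 (w (runList w F m)).2 F] := rfl

private theorem ctr_run (n : ℕ) (w₀ : List Ordering → Finset (Fin n) × Finset (Fin n))
    (F : Finset (Fin (n + 3))) (o1 o2 : Ordering) (G : Finset (Fin n))
    (h1 : o1 = weighOutcome (ctrW1 n).1 (ctrW1 n).2 F)
    (h2 : o2 = weighOutcome (ctrW2 n o1).1 (ctrW2 n o1).2 F)
    (hG : G = Finset.univ.filter (fun i => ctrEmb n (ctrCoin n (ctrPiv o1 o2)) i ∈ F)) :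
    ∀ m : ℕ, runList (ctrWeigh n w₀) F (m + 2) = o1 :: o2 :: runList w₀ G m := by
  intro m
  induction m with
  | zero =>
      have e1 : runList (ctrWeigh n w₀) F 1 = [o1] := by
        rw [show (1 : ℕ) = 0 + 1 from rfl, runList_succ]
        simp [runList, ctrWeigh, h1]
      rw [show (0 + 2 : ℕ) = 1 + 1 from rfl, runList_succ, e1, h2]
      simp [ctrWeigh, runList]
  | succ m ih =>
      rw [show (m + 1 + 2 : ℕ) = (m + 2) + 1 from rfl, runList_succ, ih]
      have hw : ctrWeigh n w₀ (o1 :: o2 :: runList w₀ G m)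
          = ((w₀ (runList w₀ G m)).1.image (ctrEmb n (ctrCoin n (ctrPiv o1 o2))),
             (w₀ (runList w₀ G m)).2.image (ctrEmb n (ctrCoin n (ctrPiv o1 o2)))) := rfl
      rw [hw]
      simp only [runList_succ w₀ G m]
      rw [weighOutcome_image _ (ctrEmb_inj n (ctrPiv o1 o2)), ← hG]
      simp

private theorem card_single {m : ℕ} (u : Fin m) (F : Finset (Fin m)) :
    (({u} : Finset (Fin m)) ∩ F).card = bnn (decide (u ∈ F)) := by
  by_cases h : u ∈ F
  · rw [Finset.singleton_inter_of_mem h]; simp [h, bnn]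
  · rw [Finset.singleton_inter_of_notMem h]; simp [h, bnn]

private theorem card_pair {m : ℕ} (u v : Fin m) (huv : u ≠ v) (F : Finset (Fin m)) :
    (({u, v} : Finset (Fin m)) ∩ F).card = bnn (decide (u ∈ F)) + bnn (decide (v ∈ F)) := by
  by_cases h : u ∈ F
  · rw [show ({u, v} : Finset (Fin m)) = insert u {v} from rfl,
        Finset.insert_inter_of_mem h, Finset.card_insert_of_notMem
          (by simp [huv] : u ∉ ({v} : Finset (Fin m)) ∩ F),
        card_single]
    simp [h, bnn]; omega
  · rw [show ({u, v} : Finset (Fin m)) = insert u {v} from rfl,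
        Finset.insert_inter_of_notMem h, card_single]
    simp [h, bnn]

private theorem ctrCoin_ne (n : ℕ) (hn : 0 < n) {j j' : Fin 4} (h : j ≠ j') :
    ctrCoin n j ≠ ctrCoin n j' := by
  fin_cases j <;> fin_cases j' <;>
    simp_all [ctrCoin, Fin.ext_iff] <;> omega

private theorem ctr_o1 (n : ℕ) (hn : 0 < n) (F : Finset (Fin (n + 3))) :
    weighOutcome (ctrW1 n).1 (ctrW1 n).2 F
      = ctrO1 (decide (ctrCoin n 0 ∈ F)) (decide (ctrCoin n 1 ∈ F))
          (decide (ctrCoin n 2 ∈ F)) (decide (ctrCoin n 3 ∈ F)) := by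
  unfold weighOutcome ctrW1 ctrO1
  rw [card_pair _ _ (ctrCoin_ne n hn (by decide)) F,
      card_pair _ _ (ctrCoin_ne n hn (by decide)) F]

private theorem ctr_o2 (n : ℕ) (hn : 0 < n) (o1 : Ordering) (F : Finset (Fin (n + 3))) :
    weighOutcome (ctrW2 n o1).1 (ctrW2 n o1).2 F
      = ctrO2 o1 (decide (ctrCoin n 0 ∈ F)) (decide (ctrCoin n 1 ∈ F))
          (decide (ctrCoin n 2 ∈ F)) (decide (ctrCoin n 3 ∈ F)) := by
  cases o1
  · show weighOutcome {ctrCoin n 2} {ctrCoin n 0, ctrCoin n 3} F = _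
    unfold weighOutcome
    rw [card_single, card_pair _ _ (ctrCoin_ne n hn (by decide)) F]; rfl
  · show weighOutcome {ctrCoin n 0} {ctrCoin n 1} F = _
    unfold weighOutcome
    rw [card_single, card_single]; rfl
  · show weighOutcome {ctrCoin n 0} {ctrCoin n 1, ctrCoin n 2} F = _
    unfold weighOutcome
    rw [card_single, card_pair _ _ (ctrCoin_ne n hn (by decide)) F]; rfl

private theorem ctrSel_decide (n : ℕ) (F : Finset (Fin (n + 3))) (j : Fin 4) :
    decide (ctrCoin n j ∈ F)
      = ctrSel (decide (ctrCoin n 0 ∈ F), decide (ctrCoin n 1 ∈ F),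
          decide (ctrCoin n 2 ∈ F), decide (ctrCoin n 3 ∈ F)) j := by
  fin_cases j <;> rfl

private theorem ctrMk_mem (n : ℕ) (hn : 0 < n) (bits : Bool × Bool × Bool × Bool)
    (j : Fin 4) : ctrCoin n j ∈ ctrMk n bits ↔ ctrSel bits j = true := by
  unfold ctrMk
  simp only [Finset.mem_image, Finset.mem_filter, Finset.mem_univ, true_and]
  constructor
  · rintro ⟨j', hj', hco⟩
    by_cases hjj : j' = j
    · subst hjj; exact hj'
    · exact absurd hco (ctrCoin_ne n hn hjj)
  · intro h; exact ⟨j, h, rfl⟩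

private theorem ctr_decode (n : ℕ) (hn : 0 < n) (F : Finset (Fin (n + 3))) (j : Fin 4)
    (S : Finset (Fin (n + 3)))
    (hmem : ∀ j' : Fin 4, ctrCoin n j' ∈ S ↔ ctrCoin n j' ∈ F)
    (hsub : ∀ z ∈ S, ∃ j' : Fin 4, z = ctrCoin n j') :
    ((Finset.univ.filter (fun i => ctrEmb n (ctrCoin n j) i ∈ F)).erase
        ⟨0, hn⟩).image (ctrEmb n (ctrCoin n j)) ∪ S = F := by
  ext z
  simp only [Finset.mem_union, Finset.mem_image, Finset.mem_erase, Finset.mem_filter,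
    Finset.mem_univ, true_and]
  constructor
  · rintro (⟨i, ⟨hi0, hiF⟩, rfl⟩ | hzS)
    · exact hiF
    · obtain ⟨j', rfl⟩ := hsub z hzS
      exact (hmem j').mp hzS
  · intro hzF
    by_cases hz : 1 ≤ z.val ∧ z.val < n
    · left
      refine ⟨⟨z.val, hz.2⟩, ⟨?_, ?_⟩, ?_⟩
      · intro h
        have := congrArg Fin.val h
        simp only [Fin.val_mk] at this
        omega
      · have : ctrEmb n (ctrCoin n j) ⟨z.val, hz.2⟩ = z := by
          unfold ctrEmb
          rw [if_neg (by simp only [Fin.val_mk]; omega)]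
        rw [this]; exact hzF
      · unfold ctrEmb
        rw [if_neg (by simp only [Fin.val_mk]; omega)]
    · right
      push_neg at hz
      have hlt := z.isLt
      have : z = ctrCoin n 3 ∨ z = ctrCoin n 0 ∨ z = ctrCoin n 1 ∨ z = ctrCoin n 2 := by
        by_cases h0 : z.val = 0
        · left; exact Fin.ext (by simp [ctrCoin, h0])
        · have hge : n ≤ z.val := by omega
          rcases (by omega : z.val = n ∨ z.val = n + 1 ∨ z.val = n + 2) with h | h | h
          · right; left; exact Fin.ext (by simp [ctrCoin, h])
          · right; right; left; exact Fin.ext (by simp [ctrCoin, h])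
          · right; right; right; exact Fin.ext (by simp [ctrCoin, h])
      rcases this with h | h | h | h <;> (subst h; exact (hmem _).mpr hzF)

private theorem ctr_step (n k : ℕ) (hn : 1 ≤ n) (h : HasStrategy n k) :
    HasStrategy (n + 3) (k + 2) := by
  obtain ⟨w₀, ans₀, hd, ha⟩ := h
  refine ⟨ctrWeigh n w₀, ctrAnswer n hn ans₀, ?_, ?_⟩
  · -- disjointness
    intro σ hσ
    match σ with
    | [] =>
        show Disjoint (ctrW1 n).1 (ctrW1 n).2
        rw [Finset.disjoint_left]
        intro z h1 h2
        unfold ctrW1 at h1 h2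
        simp only [Finset.mem_insert, Finset.mem_singleton] at h1 h2
        rcases h1 with rfl | rfl <;> rcases h2 with h2 | h2 <;>
          exact ctrCoin_ne n hn (by decide) h2
    | [o1] =>
        show Disjoint (ctrW2 n o1).1 (ctrW2 n o1).2
        cases o1 <;>
          (rw [Finset.disjoint_left]
           intro z h1 h2
           simp only [ctrW2, Finset.mem_insert, Finset.mem_singleton] at h1 h2
           first
           | (rcases h2 with h2 | h2 <;> (subst h1; exact ctrCoin_ne n hn (by decide) h2))
           | (subst h1; exact ctrCoin_ne n hn (by decide) h2))
    | o1 :: o2 :: τ =>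
        show Disjoint ((w₀ τ).1.image _) ((w₀ τ).2.image _)
        rw [Finset.disjoint_image (ctrEmb_inj n (ctrPiv o1 o2))]
        apply hd
        simp only [List.length_cons] at hσ
        omega
  · -- correctness
    intro F
    set va := decide (ctrCoin n 0 ∈ F) with hva
    set vb := decide (ctrCoin n 1 ∈ F) with hvb
    set vc := decide (ctrCoin n 2 ∈ F) with hvc
    set vx := decide (ctrCoin n 3 ∈ F) with hvx
    set o1 := weighOutcome (ctrW1 n).1 (ctrW1 n).2 F with ho1
    set o2 := weighOutcome (ctrW2 n o1).1 (ctrW2 n o1).2 F with ho2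
    set j := ctrPiv o1 o2 with hj
    set G := Finset.univ.filter (fun i => ctrEmb n (ctrCoin n j) i ∈ F) with hG
    rw [ctr_run n w₀ F o1 o2 G ho1 ho2 (by rw [hG, hj]) k]
    show (((ans₀ _).erase ⟨0, hn⟩).image (ctrEmb n (ctrCoin n j)))
        ∪ ctrMk n (ctrTbl o1 o2 (decide ((⟨0, hn⟩ : Fin n) ∈ ans₀ _))) = F
    rw [ha G]
    have hp : decide ((⟨0, hn⟩ : Fin n) ∈ G) = decide (ctrCoin n j ∈ F) := by
      have : ((⟨0, hn⟩ : Fin n) ∈ G) ↔ ctrCoin n j ∈ F := by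
        rw [hG]
        simp only [Finset.mem_filter, Finset.mem_univ, true_and]
        unfold ctrEmb
        rw [if_pos rfl]
      simp [this]
    have hbits : ctrTbl o1 o2 (decide ((⟨0, hn⟩ : Fin n) ∈ G)) = (va, vb, vc, vx) := by
      rw [hp, ctrSel_decide n F j, ← hva, ← hvb, ← hvc, ← hvx]
      rw [ho1, ctr_o1 n hn F, ← hva, ← hvb, ← hvc, ← hvx] at hj ⊢
      rw [ho2, ctr_o2 n hn _ F, ← hva, ← hvb, ← hvc, ← hvx,
        ho1, ctr_o1 n hn F, ← hva, ← hvb, ← hvc, ← hvx] at hj ⊢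
      rw [hj]
      exact ctr_core va vb vc vx
    rw [hbits]
    apply ctr_decode n hn F j
    · intro j'
      rw [ctrMk_mem n hn _ j', ← ctrSel_decide n F j']
      simp
    · intro z hz
      unfold ctrMk at hz
      simp only [Finset.mem_image, Finset.mem_filter, Finset.mem_univ, true_and] at hz
      obtain ⟨j', _, rfl⟩ := hz
      exact ⟨j', rfl⟩

private def natWeigh (n : ℕ) (σ : List Ordering) : Finset (Fin n) × Finset (Fin n) :=
  if h : σ.length < n then ({⟨σ.length, h⟩}, ∅) else (∅, ∅)

private def natF (n : ℕ) (F : Finset (Fin n)) (j : ℕ) : Ordering :=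
  if hj : j < n then (if (⟨j, hj⟩ : Fin n) ∈ F then Ordering.gt else Ordering.eq)
  else Ordering.eq

private theorem natRun (n : ℕ) (F : Finset (Fin n)) :
    ∀ m, m ≤ n → runList (natWeigh n) F m = (List.range m).map (natF n F) := by
  intro m
  induction m with
  | zero => intro _; rfl
  | succ m ih =>
      intro hm
      rw [runList_succ, ih (by omega)]
      have hlen : ((List.range m).map (natF n F)).length = m := by simp
      have hw : natWeigh n ((List.range m).map (natF n F)) = ({⟨m, by omega⟩}, ∅) := by
        unfold natWeigh
        rw [dif_pos (by omega : ((List.range m).map (natF n F)).length < n)]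
        simp only [Prod.mk.injEq, and_true]
        congr 1
        exact Fin.ext (by simp)
      rw [hw]
      have hout : weighOutcome {(⟨m, by omega⟩ : Fin n)} ∅ F = natF n F m := by
        unfold weighOutcome natF
        rw [card_single, dif_pos (by omega : m < n)]
        simp only [Finset.empty_inter, Finset.card_empty]
        by_cases h : (⟨m, by omega⟩ : Fin n) ∈ F <;> simp [h, bnn] <;> rfl
      rw [hout, List.range_succ]
      simp

private theorem hasStrategy_self (n : ℕ) : HasStrategy n n := by
  refine ⟨natWeigh n,
    fun σ => Finset.univ.filter (fun i => σ.getD i.val Ordering.eq = Ordering.gt), ?_, ?_⟩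
  · intro σ hσ
    unfold natWeigh
    split <;> simp
  · intro F
    rw [natRun n F n le_rfl]
    ext i
    simp only [Finset.mem_filter, Finset.mem_univ, true_and]
    have hget : ((List.range n).map (natF n F)).getD i.val Ordering.eq = natF n F i.val := by
      rw [List.getD_eq_getElem?_getD]
      rw [List.getElem?_map]
      rw [List.getElem?_range i.isLt]
      rfl
    rw [hget]
    unfold natF
    rw [dif_pos i.isLt]
    by_cases h : i ∈ F
    · simp [h]
    · simp [h]

private theorem not_hasStrategy_zero (n : ℕ) (hn : 1 ≤ n) : ¬ HasStrategy n 0 := by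
  rintro ⟨w, a, _, ha⟩
  have h1 : a [] = ∅ := ha ∅
  have h2 : a [] = Finset.univ := ha Finset.univ
  have : (⟨0, hn⟩ : Fin n) ∈ (∅ : Finset (Fin n)) := by
    rw [← h1, h2]; exact Finset.mem_univ _
  simp at this

/-- **Lemma 2.** For every `n ≥ 1` and `k ≥ 1`, a correct adaptive strategy of
depth `k` on `n` coins yields a correct adaptive strategy of depth `k + 2` on
`n + 3` coins; consequently `g (n + 3) ≤ g n + 2` for all `n ≥ 1`. -/
theorem counterfeit_add_three_coins :
    (∀ n k : ℕ, 1 ≤ n → 1 ≤ k → HasStrategy n k → HasStrategy (n + 3) (k + 2)) ∧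
    (∀ n : ℕ, 1 ≤ n → g (n + 3) ≤ g n + 2) := by
  constructor
  · intro n k hn _ h
    exact ctr_step n k hn h
  · intro n hn
    have hmem : g n ∈ {k | HasStrategy n k} :=
      Nat.sInf_mem ⟨n, hasStrategy_self n⟩
    have hnext : HasStrategy (n + 3) (g n + 2) := ctr_step n (g n) hn hmem
    exact Nat.sInf_le hnext
end
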